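/- Fix real constants A > 0 and M ≥ 0. Let z : ℝ → ℝ be differentiable on [t₀, t₁] with z'(t) = A·z(t) + w(t) and |w(t)| ≤ M for all t ∈ [t₀, t₁]. If z(t₀) > (M/A)·(1 − e^{−A(t₁ − t₀)}), then z(t) > 0 for all t ∈ [t₀, t₁]. In particular, if at a triggering event z(t_s) = J with J > (M/A)·(1 − e^{−Aγ}) and t₁ − t₀ ≤ γ, then the sign of z is preserved throughout the communication delay interval, so the single transmitted bit sign(z(t_s)) correctly determines the sign of z(t_c). -/

import Mathlib

open Set Filter

lemma pos_aux
    (A M : ℝ) (z w : ℝ → ℝ) (t₀ t₁ : ℝ)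
    (hA : 0 < A) (hM : 0 ≤ M) (h01 : t₀ ≤ t₁)
    (hz : ∀ t ∈ Icc t₀ t₁, HasDerivAt z (A * z t + w t) t)
    (hw : ∀ t ∈ Icc t₀ t₁, |w t| ≤ M)
    (h0 : (M / A) * (1 - Real.exp (-(A * (t₁ - t₀)))) < z t₀) :
    ∀ t ∈ Icc t₀ t₁, 0 < z t := by
  set g : ℝ → ℝ := fun t =>
    Real.exp (-(A * (t - t₀))) * z t + (M / A) * (1 - Real.exp (-(A * (t - t₀)))) with hg
  have hgderiv : ∀ t ∈ Icc t₀ t₁,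
      HasDerivAt g (Real.exp (-(A * (t - t₀))) * (w t + M)) t := by
    intro t ht
    have he : HasDerivAt (fun s => Real.exp (-(A * (s - t₀))))
        (Real.exp (-(A * (t - t₀))) * (-A)) t := by
      have h1 : HasDerivAt (fun s : ℝ => -(A * (s - t₀))) (-A) t := by
        have := ((hasDerivAt_id t).sub_const t₀).const_mul A
        exact this.neg.congr_deriv (by simp)
      simpa [mul_comm] using h1.exp
    have h2 := he.mul (hz t ht)
    have h3 : HasDerivAt (fun s => (M / A) * (1 - Real.exp (-(A * (s - t₀)))))
        ((M / A) * (0 - Real.exp (-(A * (t - t₀))) * (-A))) t :=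
      ((hasDerivAt_const t (1:ℝ)).sub he).const_mul (M / A)
    have h4 := h2.add h3
    refine h4.congr_deriv ?_
    field_simp
    ring
  have hcont : ContinuousOn g (Icc t₀ t₁) :=
    fun t ht => (hgderiv t ht).continuousAt.continuousWithinAt
  have hmono : MonotoneOn g (Icc t₀ t₁) := by
    apply monotoneOn_of_deriv_nonneg (convex_Icc t₀ t₁) hcont
    · intro x hx
      rw [interior_Icc] at hx
      exact (hgderiv x (Ioo_subset_Icc_self hx)).differentiableAt.differentiableWithinAt
    · intro x hx
      rw [interior_Icc] at hx
      rw [(hgderiv x (Ioo_subset_Icc_self hx)).deriv]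
      have hwx := hw x (Ioo_subset_Icc_self hx)
      have h5 : -M ≤ w x := neg_le_of_abs_le hwx
      have := (Real.exp_pos (-(A * (x - t₀)))).le
      nlinarith
  intro t ht
  have hle : g t₀ ≤ g t := hmono (left_mem_Icc.mpr h01) ht (ht.1)
  have hgt0 : g t₀ = z t₀ := by simp [hg]
  have hexp : Real.exp (-(A * (t₁ - t₀))) ≤ Real.exp (-(A * (t - t₀))) := by
    apply Real.exp_le_exp.mpr
    nlinarith [ht.2]
  have hbound : (M / A) * (1 - Real.exp (-(A * (t - t₀)))) ≤
      (M / A) * (1 - Real.exp (-(A * (t₁ - t₀)))) := by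
    apply mul_le_mul_of_nonneg_left (by linarith) (by positivity)
  have hpos : 0 < Real.exp (-(A * (t - t₀))) * z t := by
    have : z t₀ ≤ Real.exp (-(A * (t - t₀))) * z t
        + (M / A) * (1 - Real.exp (-(A * (t - t₀)))) := by
      rw [← hgt0]; exact hle
    linarith
  nlinarith [Real.exp_pos (-(A * (t - t₀)))]

/-- Sign preservation of the estimation error across the delay interval:
if `ż = A·z + w` with `|w| ≤ M` on `[t₀, t₁]` and
`z(t₀) > (M/A)(1 − e^{−A(t₁−t₀)})`, then `z(t) > 0` on `[t₀, t₁]`.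
In particular, if `|z(t₀)| = J` with `J > (M/A)(1 − e^{−Aγ})` and
`t₁ − t₀ ≤ γ`, then the sign of `z` is preserved throughout `[t₀, t₁]`,
so the transmitted bit `sign(z(t_s))` correctly determines `sign(z(t_c))`. -/
theorem sign_preservation
    (A M : ℝ) (z w : ℝ → ℝ) (t₀ t₁ : ℝ)
    (hA : 0 < A) (hM : 0 ≤ M) (h01 : t₀ ≤ t₁)
    (hz : ∀ t ∈ Icc t₀ t₁, HasDerivAt z (A * z t + w t) t)
    (hw : ∀ t ∈ Icc t₀ t₁, |w t| ≤ M) :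
    ((M / A) * (1 - Real.exp (-(A * (t₁ - t₀)))) < z t₀ →
      ∀ t ∈ Icc t₀ t₁, 0 < z t) ∧
    (∀ J γ : ℝ, (M / A) * (1 - Real.exp (-(A * γ))) < J → |z t₀| = J →
      t₁ - t₀ ≤ γ → ∀ t ∈ Icc t₀ t₁, Real.sign (z t) = Real.sign (z t₀)) := by
  constructor
  · exact pos_aux A M z w t₀ t₁ hA hM h01 hz hw
  · intro J γ hJ hzJ hγ
    have hexp : Real.exp (-(A * γ)) ≤ Real.exp (-(A * (t₁ - t₀))) := by
      apply Real.exp_le_exp.mpr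
      nlinarith
    have hthr : (M / A) * (1 - Real.exp (-(A * (t₁ - t₀)))) < |z t₀| := by
      rw [hzJ]
      calc (M / A) * (1 - Real.exp (-(A * (t₁ - t₀))))
          ≤ (M / A) * (1 - Real.exp (-(A * γ))) :=
            mul_le_mul_of_nonneg_left (by linarith) (by positivity)
        _ < J := hJ
    rcases abs_cases (z t₀) with ⟨habs, hsign⟩ | ⟨habs, hsign⟩
    · -- z t₀ ≥ 0
      have hpos := pos_aux A M z w t₀ t₁ hA hM h01 hz hw (by linarith [habs ▸ hthr])
      intro t ht
      rw [Real.sign_of_pos (hpos t ht),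
        Real.sign_of_pos (hpos t₀ (left_mem_Icc.mpr h01))]
    · -- z t₀ < 0
      have hneg : ∀ t ∈ Icc t₀ t₁, 0 < -z t := by
        apply pos_aux A M (fun t => -z t) (fun t => -w t) t₀ t₁ hA hM h01
        · intro t ht
          have := (hz t ht).neg
          exact this.congr_deriv (by ring)
        · intro t ht; simpa using hw t ht
        · show (M / A) * (1 - Real.exp (-(A * (t₁ - t₀)))) < -z t₀
          rw [habs] at hthr
          linarith
      intro t ht
      have h1 : z t < 0 := by have := hneg t ht; linarith
      have h2 : z t₀ < 0 := by have := hneg t₀ (left_mem_Icc.mpr h01); linarith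
      rw [Real.sign_of_neg h1, Real.sign_of_neg h2]
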